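/- (Theorem A, algebraic form.) Let a ∈ ℝ[z₁,…,z_d] satisfy the zero condition of order one: a(1,…,1) = 2^d and a(ε) = 0 for every ε ∈ Z'. Then there exist polynomials c_Θ ∈ ℝ[z₁,…,z_d], indexed by the finitely many d×d integer matrices Θ whose columns are 0-1 vectors with exactly one or two entries equal to 1 and with det Θ = ±1, such that a = Σ_Θ c_Θ · 2^d · q_Θ and Σ_Θ c_Θ(1,…,1) = 1. -/

import Mathlib

open MvPolynomial

/-- For a `d×d` integer matrix `Θ` with 0-1 columns, the polynomial
`q_Θ(z) = ∏_{columns θ of Θ} (1 + z^θ)/2`, where `z^θ = z₁^{θ₁}⋯z_d^{θ_d}`. -/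
noncomputable def qpoly {d : ℕ} (Θ : Matrix (Fin d) (Fin d) ℤ) : MvPolynomial (Fin d) ℝ :=
  ∏ c : Fin d, (C (1 / 2 : ℝ) * (1 + ∏ i : Fin d, X i ^ (Θ i c).toNat))

namespace StmtAux

open Matrix

variable {d : ℕ}

local notation "R" => MvPolynomial (Fin d) ℝ

/-- The defining predicate of the index set. -/
def P (Θ : Matrix (Fin d) (Fin d) ℤ) : Prop :=
  (∀ i j, Θ i j = 0 ∨ Θ i j = 1) ∧
  (∀ j, (∑ i, Θ i j) = 1 ∨ (∑ i, Θ i j) = 2) ∧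
  (Θ.det = 1 ∨ Θ.det = -1)

noncomputable def g (Θ : Matrix (Fin d) (Fin d) ℤ) : R := (2 : R) ^ d * qpoly Θ

noncomputable def J (d : ℕ) : Ideal (MvPolynomial (Fin d) ℝ) :=
  Ideal.span (g '' (setOf P))

lemma g_mem_J {Θ : Matrix (Fin d) (Fin d) ℤ} (h : P Θ) : g Θ ∈ J d :=
  Ideal.subset_span ⟨Θ, h, rfl⟩

/-- Generator matrices: identity modified on columns in `V`, with partner map `τ`. -/
def genMat (τ : Fin d → Fin d) (V : Finset (Fin d)) : Matrix (Fin d) (Fin d) ℤ :=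
  Matrix.of fun i c => if i = c then 1 else if c ∈ V ∧ i = τ c then 1 else 0

lemma prod_pow_ite {M : Type*} [CommMonoid M] (ε : Fin d → M) (c : Fin d) :
    (∏ i, ε i ^ (if i = c then 1 else 0)) = ε c := by
  have : ∀ i, ε i ^ (if i = c then 1 else 0) = if i = c then ε i else 1 := by
    intro i; split <;> simp
  simp_rw [this]
  simp [Finset.prod_ite_eq']

lemma prod_X_pow_genMat (τ : Fin d → Fin d) (V : Finset (Fin d))
    (hτ : ∀ c ∈ V, τ c ≠ c) (c : Fin d) :
    (∏ i, (X i : R) ^ (genMat τ V i c).toNat)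
      = if c ∈ V then X c * X (τ c) else X c := by
  by_cases hc : c ∈ V
  · have he : ∀ i, (genMat τ V i c).toNat
        = (if i = c then 1 else 0) + (if i = τ c then 1 else 0) := by
      intro i
      simp only [genMat, Matrix.of_apply]
      have hne : ¬ c = τ c := fun h => (hτ c hc) h.symm
      by_cases h1 : i = c
      · subst h1
        simp [hne]
      · by_cases h2 : i = τ c <;> simp [h1, h2, hc, hτ c hc]
    simp_rw [he, pow_add, Finset.prod_mul_distrib, prod_pow_ite, hc, if_true]
  · have he : ∀ i, (genMat τ V i c).toNat = (if i = c then 1 else 0) := by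
      intro i
      simp only [genMat, Matrix.of_apply]
      by_cases h1 : i = c <;> simp [h1, hc]
    simp_rw [he, prod_pow_ite]
    rw [if_neg hc]

lemma two_mul_C_half : (2 : R) * C (1 / 2 : ℝ) = 1 := by
  have : (2 : R) = C (2 : ℝ) := (map_ofNat C 2).symm
  rw [this, ← C_mul]
  norm_num

lemma g_genMat (τ : Fin d → Fin d) (V : Finset (Fin d)) (hτ : ∀ c ∈ V, τ c ≠ c) :
    g (genMat τ V)
      = ∏ c : Fin d, (if c ∈ V then 1 + X c * X (τ c) else 1 + (X c : R)) := by
  have : g (genMat τ V)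
      = ∏ c : Fin d, ((2 : R) * (C (1 / 2 : ℝ) *
          (1 + ∏ i : Fin d, X i ^ (genMat τ V i c).toNat))) := by
    rw [Finset.prod_mul_distrib, Finset.prod_const, Finset.card_univ, Fintype.card_fin]
    rfl
  rw [this]
  refine Finset.prod_congr rfl fun c _ => ?_
  rw [← mul_assoc, two_mul_C_half, one_mul, prod_X_pow_genMat τ V hτ c]
  split <;> rfl

lemma genMat_det (τ : Fin d → Fin d) (V : Finset (Fin d))
    (κ : Fin d → ℕ) (hinj : Function.Injective κ)
    (hlt : ∀ c ∈ V, κ c < κ (τ c)) : (genMat τ V).det = 1 := by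
  rw [← Matrix.det_transpose]
  have hbt : ((genMat τ V)ᵀ).BlockTriangular κ := by
    intro p q hpq
    show genMat τ V q p = 0
    simp only [genMat, Matrix.of_apply]
    have h1 : ¬ q = p := by rintro rfl; exact lt_irrefl _ hpq
    have h2 : ¬ (p ∈ V ∧ q = τ p) := by
      rintro ⟨hp, rfl⟩
      exact absurd (hlt p hp) (not_lt.mpr (le_of_lt hpq))
    rw [if_neg h1, if_neg h2]
  rw [hbt.det]
  rw [Finset.prod_image (fun x _ y _ h => hinj h)]
  have : ∀ i : Fin d, (((genMat τ V)ᵀ).toSquareBlock κ (κ i)).det = 1 := by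
    intro i
    haveI : Unique {p // κ p = κ i} :=
      ⟨⟨⟨i, rfl⟩⟩, fun ⟨p, hp⟩ => Subtype.ext (hinj hp)⟩
    rw [Matrix.det_unique]
    simp [Matrix.toSquareBlock_def, genMat]
  simp [this]

lemma P_genMat (τ : Fin d → Fin d) (V : Finset (Fin d))
    (hτ : ∀ c ∈ V, τ c ≠ c)
    (κ : Fin d → ℕ) (hinj : Function.Injective κ)
    (hlt : ∀ c ∈ V, κ c < κ (τ c)) : P (genMat τ V) := by
  refine ⟨?_, ?_, Or.inl (genMat_det τ V κ hinj hlt)⟩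
  · intro i c
    simp only [genMat, Matrix.of_apply]
    split
    · right; rfl
    · split
      · right; rfl
      · left; rfl
  · intro c
    by_cases hc : c ∈ V
    · right
      have he : ∀ i, genMat τ V i c
          = ((if i = c then 1 else 0) + (if i = τ c then 1 else 0) : ℤ) := by
        intro i
        simp only [genMat, Matrix.of_apply]
        have hne : ¬ c = τ c := fun h => (hτ c hc) h.symm
        by_cases h1 : i = c
        · subst h1; simp [hne]
        · by_cases h2 : i = τ c <;> simp [h1, h2, hc, hτ c hc]
      simp_rw [he, Finset.sum_add_distrib]
      rw [Finset.sum_ite_eq' Finset.univ c (fun _ => (1:ℤ)),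
        Finset.sum_ite_eq' Finset.univ (τ c) (fun _ => (1:ℤ))]
      simp
    · left
      have he : ∀ i, genMat τ V i c = ((if i = c then 1 else 0) : ℤ) := by
        intro i
        simp only [genMat, Matrix.of_apply]
        by_cases h1 : i = c <;> simp [h1, hc]
      simp_rw [he]
      rw [Finset.sum_ite_eq' Finset.univ c (fun _ => (1:ℤ))]
      simp

noncomputable def term (τ : Fin d → Fin d) (V : Finset (Fin d)) : R :=
  (∏ c ∈ V, (X c * (X (τ c) - 1))) * ∏ c ∈ Finset.univ \ V, (1 + X c)

lemma gen_expand (τ : Fin d → Fin d) (V : Finset (Fin d)) :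
    (∏ c : Fin d, (if c ∈ V then 1 + X c * X (τ c) else 1 + (X c : R)))
      = ∑ U ∈ V.powerset, term τ U := by
  have h1 : Finset.univ.filter (fun c => c ∈ V) = V := by ext; simp
  have h2 : Finset.univ.filter (fun c => ¬ c ∈ V) = Finset.univ \ V := by
    ext; simp [Finset.mem_sdiff]
  rw [← Finset.prod_filter_mul_prod_filter_not Finset.univ (fun c => c ∈ V)]
  rw [h1, h2]
  have h3 : (∏ c ∈ V, (if c ∈ V then 1 + X c * X (τ c) else 1 + (X c : R)))
      = ∏ c ∈ V, ((X c * (X (τ c) - 1)) + (1 + X c)) := by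
    refine Finset.prod_congr rfl fun c hc => ?_
    rw [if_pos hc]; ring
  have h4 : (∏ c ∈ Finset.univ \ V, (if c ∈ V then 1 + X c * X (τ c) else 1 + (X c : R)))
      = ∏ c ∈ Finset.univ \ V, (1 + (X c : R)) := by
    refine Finset.prod_congr rfl fun c hc => ?_
    rw [if_neg (Finset.mem_sdiff.mp hc).2]
  rw [h3, h4, Finset.prod_add, Finset.sum_mul]
  refine Finset.sum_congr rfl fun U hU => ?_
  have hUV : U ⊆ V := Finset.mem_powerset.mp hU
  rw [term, mul_assoc]
  congr 1
  rw [← Finset.prod_union]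
  · congr 1
    ext x
    simp only [Finset.mem_union, Finset.mem_sdiff, Finset.mem_univ, true_and]
    constructor
    · rintro (⟨hxV, hxU⟩ | hxV)
      · exact hxU
      · exact fun hxU => hxV (hUV hxU)
    · intro hxU
      by_cases hxV : x ∈ V
      · exact Or.inl ⟨hxV, hxU⟩
      · exact Or.inr hxV
  · refine Finset.disjoint_left.mpr ?_
    intro x hx1 hx2
    exact (Finset.mem_sdiff.mp hx2).2 (Finset.mem_sdiff.mp hx1).1

lemma term_mem (τ : Fin d → Fin d) (W : Finset (Fin d))
    (hτ : ∀ c ∈ W, τ c ≠ c)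
    (κ : Fin d → ℕ) (hinj : Function.Injective κ)
    (hlt : ∀ c ∈ W, κ c < κ (τ c)) :
    ∀ V, V ⊆ W → term τ V ∈ J d := by
  intro V
  induction V using Finset.strongInduction with
  | _ V ih =>
    intro hVW
    have hτV : ∀ c ∈ V, τ c ≠ c := fun c hc => hτ c (hVW hc)
    have hgen : g (genMat τ V) ∈ J d :=
      g_mem_J (P_genMat τ V hτV κ hinj (fun c hc => hlt c (hVW hc)))
    have hx : g (genMat τ V) = term τ V + ∑ U ∈ V.powerset.erase V, term τ U := by
      rw [g_genMat τ V hτV, gen_expand]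
      exact (Finset.add_sum_erase _ _ (Finset.mem_powerset_self V)).symm
    have hterm : term τ V = g (genMat τ V) - ∑ U ∈ V.powerset.erase V, term τ U := by
      rw [hx]; ring
    rw [hterm]
    refine Ideal.sub_mem _ hgen (Ideal.sum_mem _ fun U hU => ?_)
    obtain ⟨hne, hUp⟩ := Finset.mem_erase.mp hU
    exact ih U (lt_of_le_of_ne (Finset.mem_powerset.mp hUp) hne)
      ((Finset.mem_powerset.mp hUp).trans hVW)

/-- the chain successor map on `W`, with default `j` -/
def tauF (j : Fin d) (W : Finset (Fin d)) (c : Fin d) : Fin d :=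
  if h : (W.filter (fun w => c < w)).Nonempty then (W.filter (fun w => c < w)).min' h else j

lemma tauF_cases (j : Fin d) (W : Finset (Fin d)) (c : Fin d) :
    tauF j W c = j ∨ (tauF j W c ∈ W ∧ c < tauF j W c) := by
  rw [tauF]
  split
  · right
    next h =>
      have := Finset.min'_mem _ h
      rw [Finset.mem_filter] at this
      exact ⟨this.1, this.2⟩
  · left; rfl

lemma tauF_prod (j : Fin d) :
    ∀ W : Finset (Fin d), j ∉ W → ∀ hW : W.Nonempty,
    (∏ c ∈ W, ((X (tauF j W c) : R) - 1))
      = ((X j : R) - 1) * ∏ c ∈ W.erase (W.min' hW), ((X c : R) - 1) := by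
  intro W
  induction W using Finset.strongInduction with
  | _ W ih =>
    intro hj hW
    have hkW : W.min' hW ∈ W := W.min'_mem hW
    set k := W.min' hW with hk
    set W' := W.erase k with hW'def
    have hkW' : k ∉ W' := Finset.notMem_erase _ _
    have hjW' : j ∉ W' := fun h => hj (Finset.mem_of_mem_erase h)
    have hsub : W' ⊂ W := Finset.erase_ssubset hkW
    have hsplit : (∏ c ∈ W, ((X (tauF j W c) : R) - 1))
        = ((X (tauF j W k) : R) - 1) * ∏ c ∈ W', ((X (tauF j W c) : R) - 1) :=
      (Finset.mul_prod_erase W _ hkW).symm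
    have hlt' : ∀ c ∈ W', k < c := fun c hc =>
      lt_of_le_of_ne (W.min'_le c (Finset.mem_of_mem_erase hc))
        (Ne.symm (Finset.ne_of_mem_erase hc))
    have htau' : ∀ c ∈ W', tauF j W c = tauF j W' c := by
      intro c hc
      have hfe : W.filter (fun w => c < w) = W'.filter (fun w => c < w) := by
        ext w
        simp only [Finset.mem_filter, hW'def, Finset.mem_erase]
        constructor
        · rintro ⟨hwW, hcw⟩
          refine ⟨⟨?_, hwW⟩, hcw⟩
          rintro rfl
          exact absurd hcw (not_lt.mpr (le_of_lt (hlt' c hc)))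
        · rintro ⟨⟨_, hwW⟩, hcw⟩; exact ⟨hwW, hcw⟩
      simp only [tauF, hfe]
    rcases Finset.eq_empty_or_nonempty W' with hE | hNE
    · -- W = {k}
      have hWk : W = {k} := by
        have h5 : W = insert k W' := by rw [hW'def, Finset.insert_erase hkW]
        rw [h5, hE]
        rfl
      have hfk : W.filter (fun w => k < w) = ∅ := by
        rw [hWk]
        ext w
        simp only [Finset.mem_filter, Finset.mem_singleton, Finset.notMem_empty,
          iff_false, not_and]
        rintro rfl
        exact lt_irrefl _
      have htk : tauF j W k = j := by
        rw [tauF, hfk]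
        simp
      rw [hsplit, hE, htk]
      simp
    · have hf : W.filter (fun w => k < w) = W' := by
        ext w
        simp only [Finset.mem_filter, hW'def, Finset.mem_erase]
        constructor
        · rintro ⟨hwW, hkw⟩
          exact ⟨(ne_of_gt hkw), hwW⟩
        · rintro ⟨hne, hwW⟩
          exact ⟨hwW, lt_of_le_of_ne (W.min'_le w hwW) (Ne.symm hne)⟩
      have hmin' : tauF j W k = W'.min' hNE := by
        simp only [tauF, hf, dif_pos hNE]
      have hIH := ih W' hsub hjW' hNE
      have hpc : (∏ c ∈ W', ((X (tauF j W c) : R) - 1))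
          = ∏ c ∈ W', ((X (tauF j W' c) : R) - 1) :=
        Finset.prod_congr rfl (fun c hc => by rw [htau' c hc])
      rw [hsplit, hpc, hIH, hmin']
      rw [← Finset.mul_prod_erase W' (fun c => ((X c : R) - 1)) (W'.min'_mem hNE)]
      ring

/-- the key order function -/
def kappa (j : Fin d) (i : Fin d) : ℕ := if i = j then d else i.val

lemma kappa_inj (j : Fin d) : Function.Injective (kappa j) := by
  intro p q h
  unfold kappa at h
  by_cases hp : p = j <;> by_cases hq : q = j
  · rw [hp, hq]
  · rw [if_pos hp, if_neg hq] at h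
    exact absurd h.symm (ne_of_lt q.isLt)
  · rw [if_neg hp, if_pos hq] at h
    exact absurd h (ne_of_lt p.isLt)
  · rw [if_neg hp, if_neg hq] at h
    exact Fin.ext h

lemma kappa_lt (j : Fin d) (W : Finset (Fin d)) (hj : j ∉ W) :
    ∀ c ∈ W, kappa j c < kappa j (tauF j W c) := by
  intro c hc
  have hcj : c ≠ j := fun h => hj (h ▸ hc)
  have hcv : kappa j c = c.val := if_neg hcj
  rcases tauF_cases j W c with h | ⟨hmem, hlt⟩
  · rw [h, hcv, kappa, if_pos rfl]
    exact c.isLt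
  · have : tauF j W c ≠ j := fun h => hj (h ▸ hmem)
    rw [hcv, kappa, if_neg this]
    exact hlt

lemma claim_TW (k : Fin d) : ∀ n : ℕ, ∀ T W : Finset (Fin d), Disjoint T W →
    T ⊆ Finset.univ.erase k → W ⊆ Finset.univ.erase k →
    ((Finset.univ.erase k) \ (T ∪ W)).card = n →
    ((X k : R)^2 - 1) * (∏ c ∈ W, (X c * (X c - 1))) * (∏ c ∈ T, (1 + X c)) ∈ J d := by
  intro n
  induction n with
  | zero =>
    intro T W hdisj hT hW hcard
    have hTW : T ∪ W = Finset.univ.erase k := by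
      apply Finset.Subset.antisymm (Finset.union_subset hT hW)
      rw [← Finset.sdiff_eq_empty_iff_subset]
      exact Finset.card_eq_zero.mp hcard
    have hkW : k ∉ W := fun h => (Finset.mem_erase.mp (hW h)).1 rfl
    have hkT : k ∉ T := fun h => (Finset.mem_erase.mp (hT h)).1 rfl
    rcases Finset.eq_empty_or_nonempty W with hWE | hWN
    · -- W empty, T = erase k
      subst hWE
      have hTeq : T = Finset.univ.erase k := by simpa using hTW
      have hmem : g (genMat (fun _ => k) ∅) ∈ J d :=
        g_mem_J (P_genMat _ _ (by simp) (kappa k) (kappa_inj k) (by simp))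
      have hgeq : g (genMat (fun _ => k) (∅ : Finset (Fin d)))
          = ∏ c : Fin d, (1 + (X c : R)) := by
        rw [g_genMat _ _ (by simp)]
        simp
      have heq : ((X k : R)^2 - 1) * (∏ c ∈ (∅ : Finset (Fin d)), (X c * (X c - 1)))
            * (∏ c ∈ T, (1 + X c))
          = ((X k : R) - 1) * g (genMat (fun _ => k) ∅) := by
        rw [hgeq, hTeq, ← Finset.mul_prod_erase Finset.univ (fun c => 1 + (X c : R))
          (Finset.mem_univ k)]
        simp
        ring
      rw [heq]
      exact Ideal.mul_mem_left _ _ hmem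
    · -- W nonempty : chain
      have hτne : ∀ c ∈ W, tauF k W c ≠ c := by
        intro c hc
        rcases tauF_cases k W c with h | ⟨_, hlt⟩
        · rw [h]; exact fun hh => hkW (hh ▸ hc)
        · exact (ne_of_gt hlt)
      have htm : term (tauF k W) W ∈ J d :=
        term_mem (tauF k W) W hτne (kappa k) (kappa_inj k) (kappa_lt k W hkW) W
          Finset.Subset.rfl
      set km := W.min' hWN with hkm
      have hkmW : km ∈ W := W.min'_mem hWN
      have hTeq : T = (Finset.univ.erase k) \ W := by
        apply Finset.Subset.antisymm
        · intro x hx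
          rw [Finset.mem_sdiff]
          exact ⟨hT hx, fun hxW => (Finset.disjoint_left.mp hdisj hx) hxW⟩
        · intro x hx
          rw [Finset.mem_sdiff] at hx
          rcases Finset.mem_union.mp (hTW ▸ hx.1 : x ∈ T ∪ W) with h | h
          · exact h
          · exact absurd h hx.2
      have hsd : (Finset.univ \ W).erase k = T := by
        rw [hTeq]
        ext x
        simp only [Finset.mem_erase, Finset.mem_sdiff, Finset.mem_univ, true_and]
        tauto
      have hkuW : k ∈ Finset.univ \ W := by
        simp [Finset.mem_sdiff, hkW]
      have heq : ((X k : R)^2 - 1) * (∏ c ∈ W, (X c * (X c - 1)))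
            * (∏ c ∈ T, (1 + X c))
          = ((X km : R) - 1) * term (tauF k W) W := by
        rw [term, Finset.prod_mul_distrib, Finset.prod_mul_distrib,
          tauF_prod k W hkW hWN, ← hkm,
          ← Finset.mul_prod_erase W (fun c => ((X c : R) - 1)) hkmW,
          ← Finset.mul_prod_erase (Finset.univ \ W) (fun c => (1 + (X c : R))) hkuW,
          hsd]
        ring
      rw [heq]
      exact Ideal.mul_mem_left _ _ htm
  | succ n ihn =>
    intro T W hdisj hT hW hcard
    have hne : ((Finset.univ.erase k) \ (T ∪ W)).Nonempty := by
      rw [← Finset.card_pos, hcard]; exact Nat.succ_pos n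
    obtain ⟨i, hi⟩ := hne
    rw [Finset.mem_sdiff, Finset.mem_union] at hi
    obtain ⟨hik, hiTW⟩ := hi
    have hiT : i ∉ T := fun h => hiTW (Or.inl h)
    have hiW : i ∉ W := fun h => hiTW (Or.inr h)
    have hcard' : ∀ U : Finset (Fin d), U = insert i (T ∪ W) →
        ((Finset.univ.erase k) \ U).card = n := by
      intro U hU
      have : (Finset.univ.erase k) \ U = ((Finset.univ.erase k) \ (T ∪ W)).erase i := by
        rw [hU]
        ext x
        simp only [Finset.mem_sdiff, Finset.mem_erase, Finset.mem_insert]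
        tauto
      rw [this, Finset.card_erase_of_mem, hcard]
      · rfl
      · rw [Finset.mem_sdiff, Finset.mem_union]
        exact ⟨hik, fun h => hiTW h⟩
    have ihT : ((X k : R)^2 - 1) * (∏ c ∈ W, (X c * (X c - 1)))
        * (∏ c ∈ insert i T, (1 + X c)) ∈ J d := by
      refine ihn (insert i T) W ?_ ?_ hW (hcard' _ ?_)
      · rw [Finset.disjoint_left]
        intro x hx
        rcases Finset.mem_insert.mp hx with rfl | hx
        · exact hiW
        · exact Finset.disjoint_left.mp hdisj hx
      · intro x hx
        rcases Finset.mem_insert.mp hx with rfl | hx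
        · exact hik
        · exact hT hx
      · rw [Finset.insert_union]
    have ihW : ((X k : R)^2 - 1) * (∏ c ∈ insert i W, (X c * (X c - 1)))
        * (∏ c ∈ T, (1 + X c)) ∈ J d := by
      refine ihn T (insert i W) ?_ hT ?_ (hcard' _ ?_)
      · rw [Finset.disjoint_right]
        intro x hx
        rcases Finset.mem_insert.mp hx with rfl | hx
        · exact hiT
        · exact fun h => Finset.disjoint_left.mp hdisj h hx
      · intro x hx
        rcases Finset.mem_insert.mp hx with rfl | hx
        · exact hik
        · exact hW hx
      · rw [Finset.union_insert]
    have key : ((X k : R)^2 - 1) * (∏ c ∈ W, (X c * (X c - 1))) * (∏ c ∈ T, (1 + X c))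
        = C (1/2 : ℝ) * (((2 : R) - X i) *
            (((X k : R)^2 - 1) * (∏ c ∈ W, (X c * (X c - 1)))
              * (∏ c ∈ insert i T, (1 + X c)))
          + ((X k : R)^2 - 1) * (∏ c ∈ insert i W, (X c * (X c - 1)))
              * (∏ c ∈ T, (1 + X c))) := by
      rw [Finset.prod_insert hiT, Finset.prod_insert hiW]
      have h2 : (((2 : R) - X i) *
            (((X k : R)^2 - 1) * (∏ c ∈ W, (X c * (X c - 1)))
              * ((1 + X i) * ∏ c ∈ T, (1 + X c)))
          + ((X k : R)^2 - 1) * ((X i * (X i - 1)) * ∏ c ∈ W, (X c * (X c - 1)))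
              * (∏ c ∈ T, (1 + X c)))
          = (2 : R) * (((X k : R)^2 - 1) * (∏ c ∈ W, (X c * (X c - 1)))
              * (∏ c ∈ T, (1 + X c))) := by
        ring
      rw [h2, ← mul_assoc, mul_comm (C (1/2 : ℝ)) (2 : R), two_mul_C_half, one_mul]
    rw [key]
    exact Ideal.mul_mem_left _ _
      (Ideal.add_mem _ (Ideal.mul_mem_left _ _ ihT) ihW)

lemma Xsq_sub_one_mem (k : Fin d) : ((X k : R)^2 - 1) ∈ J d := by
  have := claim_TW k ((Finset.univ.erase k) \ (∅ ∪ ∅)).card ∅ ∅ (by simp)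
    (by simp) (by simp) rfl
  simpa using this



noncomputable def I2 (d : ℕ) : Ideal (MvPolynomial (Fin d) ℝ) :=
  Ideal.span (Set.range fun i : Fin d => (X i : MvPolynomial (Fin d) ℝ)^2 - 1)

noncomputable def par (m : Fin d →₀ ℕ) : Fin d →₀ ℕ := m.mapRange (· % 2) (by simp)

lemma prod_sub_prod_mem {A : Type*} [CommRing A] (I : Ideal A) (s : Finset (Fin d))
    (u v : Fin d → A) (h : ∀ i ∈ s, u i - v i ∈ I) :
    (∏ i ∈ s, u i) - ∏ i ∈ s, v i ∈ I := by
  classical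
  induction s using Finset.induction_on with
  | empty => simp
  | @insert a s ha ih =>
    rw [Finset.prod_insert ha, Finset.prod_insert ha]
    have key : u a * ∏ i ∈ s, u i - v a * ∏ i ∈ s, v i
        = u a * ((∏ i ∈ s, u i) - ∏ i ∈ s, v i) + (u a - v a) * ∏ i ∈ s, v i := by
      ring
    rw [key]
    exact I.add_mem (Ideal.mul_mem_left _ _ (ih fun i hi => h i (Finset.mem_insert_of_mem hi)))
      (Ideal.mul_mem_right _ _ (h a (Finset.mem_insert_self a s)))

lemma X_pow_sub_mem (i : Fin d) (n : ℕ) :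
    (X i : R)^n - (X i)^(n % 2) ∈ I2 d := by
  obtain ⟨t, ht⟩ := sub_dvd_pow_sub_pow ((X i : R)^2) 1 (n / 2)
  have h2 : (X i : R)^n = ((X i)^2)^(n/2) * (X i)^(n%2) := by
    rw [← pow_mul, ← pow_add, Nat.div_add_mod]
  have h3 : (X i : R)^n - (X i)^(n % 2) = (((X i : R)^2)^(n/2) - 1^(n/2)) * (X i)^(n%2) := by
    rw [h2]; ring
  rw [h3, ht, mul_assoc]
  exact Ideal.mul_mem_right _ _ (Ideal.subset_span ⟨i, rfl⟩)

lemma monomial_sub_par_mem (m : Fin d →₀ ℕ) (r : ℝ) :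
    (monomial m r : R) - monomial (par m) r ∈ I2 d := by
  have h1 : (monomial m r : R) = C r * ∏ i, X i ^ m i := by
    rw [monomial_eq, Finsupp.prod_fintype _ _ (fun i => pow_zero _)]
  have h2 : (monomial (par m) r : R) = C r * ∏ i, X i ^ (m i % 2) := by
    rw [monomial_eq, Finsupp.prod_fintype _ _ (fun i => pow_zero _)]
    congr 1
  have h3 : (monomial m r : R) - monomial (par m) r
      = C r * ((∏ i, (X i : R) ^ m i) - ∏ i, (X i : R) ^ (m i % 2)) := by
    rw [h1, h2]; ring
  rw [h3]
  exact Ideal.mul_mem_left _ _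
    (prod_sub_prod_mem _ _ _ _ (fun i _ => X_pow_sub_mem i (m i)))

noncomputable def parPoly (b : R) : R := ∑ m ∈ b.support, monomial (par m) (coeff m b)

lemma sub_parPoly_mem (b : R) : b - parPoly b ∈ I2 d := by
  have hb : b - parPoly b
      = ∑ m ∈ b.support, ((monomial m (coeff m b) : R) - monomial (par m) (coeff m b)) := by
    rw [Finset.sum_sub_distrib, support_sum_monomial_coeff, parPoly]
  rw [hb]
  exact Ideal.sum_mem _ fun m _ => monomial_sub_par_mem m _

lemma pow_mod_two (x : ℝ) (hx : x = -1 ∨ x = 1) (n : ℕ) : x ^ n = x ^ (n % 2) := by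
  conv_lhs => rw [← Nat.div_add_mod n 2, pow_add, pow_mul]
  rcases hx with rfl | rfl <;> simp

lemma eval_parPoly (b : R) (ε : Fin d → ℝ) (hε : ∀ i, ε i = -1 ∨ ε i = 1) :
    eval ε (parPoly b) = eval ε b := by
  rw [parPoly, map_sum, eval_eq' ε b]
  refine Finset.sum_congr rfl fun m _ => ?_
  rw [eval_monomial, Finsupp.prod_fintype _ _ (fun i => pow_zero _)]
  congr 1
  refine Finset.prod_congr rfl fun i _ => ?_
  rw [par, Finsupp.mapRange_apply]
  exact (pow_mod_two (ε i) (hε i) (m i)).symm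

def sgn (s : Fin d → Bool) : Fin d → ℝ := fun i => if s i then -1 else 1

lemma sgn_grid (s : Fin d → Bool) : ∀ i, sgn s i = -1 ∨ sgn s i = 1 := by
  intro i; rw [sgn]; by_cases h : s i <;> simp [h]

lemma sum_sgn_prod_zero (e : Fin d → ℕ) (j : Fin d) (hj : e j = 1) :
    ∑ s : Fin d → Bool, ∏ i, (sgn s i) ^ (e i) = 0 := by
  have hinv : ∀ s : Fin d → Bool,
      Function.update (Function.update s j (!s j)) j (!(Function.update s j (!s j)) j) = s := by
    intro s; funext x
    by_cases hx : x = j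
    · subst hx; simp
    · simp [Function.update_of_ne hx]
  let σ : Equiv.Perm (Fin d → Bool) :=
    ⟨fun s => Function.update s j (!s j), fun s => Function.update s j (!s j), hinv, hinv⟩
  have hF : ∀ s : Fin d → Bool,
      (∏ i, (sgn (σ s) i) ^ (e i)) = - ∏ i, (sgn s i) ^ (e i) := by
    intro s
    rw [← Finset.prod_erase_mul _ _ (Finset.mem_univ j),
      ← Finset.prod_erase_mul Finset.univ (fun i => (sgn s i)^(e i)) (Finset.mem_univ j)]
    have h1 : ∀ x ∈ Finset.univ.erase j, (sgn (σ s) x) ^ (e x) = (sgn s x) ^ (e x) := by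
      intro x hx
      have : σ s x = s x := Function.update_of_ne (Finset.mem_erase.mp hx).1 _ _
      rw [sgn, sgn, this]
    have h2 : sgn (σ s) j = - sgn s j := by
      have : σ s j = !s j := Function.update_self _ _ _
      rw [sgn, sgn, this]
      cases hsj : s j <;> simp
    rw [Finset.prod_congr rfl h1, h2, hj]
    ring
  have hsum := Equiv.sum_comp σ (fun s => ∏ i, (sgn s i) ^ (e i))
  rw [Finset.sum_congr rfl (fun s _ => hF s), Finset.sum_neg_distrib] at hsum
  linarith

lemma sum_sgn_prod_diag (m₀ : Fin d →₀ ℕ) :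
    ∑ s : Fin d → Bool, ∏ i, (sgn s i) ^ (m₀ i + m₀ i) = (2^d : ℝ) := by
  have h1 : ∀ s : Fin d → Bool, (∏ i, (sgn s i) ^ (m₀ i + m₀ i)) = 1 := by
    intro s
    refine Finset.prod_eq_one fun i _ => ?_
    have : m₀ i + m₀ i = 2 * m₀ i := by ring
    rw [this, pow_mul]
    rcases sgn_grid s i with h | h <;> rw [h] <;> simp
  rw [Finset.sum_congr rfl (fun s _ => h1 s), Finset.sum_const, Finset.card_univ]
  simp [Fintype.card_fun]

lemma multilinear_zero (p : R) (hml : ∀ m ∈ p.support, ∀ i, m i ≤ 1)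
    (hz : ∀ s : Fin d → Bool, eval (sgn s) p = 0) : p = 0 := by
  by_contra hp
  obtain ⟨m₀, hm₀⟩ := MvPolynomial.support_nonempty.mpr hp
  have key : ∀ s : Fin d → Bool,
      (∏ i, (sgn s i)^(m₀ i)) * eval (sgn s) p
        = ∑ m ∈ p.support, coeff m p * ∏ i, (sgn s i)^(m i + m₀ i) := by
    intro s
    rw [eval_eq' (sgn s) p, Finset.mul_sum]
    refine Finset.sum_congr rfl fun m _ => ?_
    simp_rw [pow_add, Finset.prod_mul_distrib]
    ring
  have h0 : ∑ s : Fin d → Bool, ∑ m ∈ p.support,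
      coeff m p * ∏ i, (sgn s i)^(m i + m₀ i) = 0 := by
    rw [Finset.sum_congr rfl (fun s _ => (key s).symm)]
    simp [hz]
  rw [Finset.sum_comm] at h0
  have h1 : ∑ m ∈ p.support, coeff m p
      * ∑ s : Fin d → Bool, ∏ i, (sgn s i)^(m i + m₀ i) = 0 := by
    rw [Finset.sum_congr rfl
      (fun m _ => Finset.mul_sum Finset.univ (fun s => ∏ i, (sgn s i)^(m i + m₀ i)) (coeff m p))]
    exact h0
  rw [Finset.sum_eq_single m₀ ?_ ?_] at h1
  · rw [sum_sgn_prod_diag m₀] at h1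
    have h2 : coeff m₀ p = 0 := by
      have hpow : (2:ℝ)^d ≠ 0 := pow_ne_zero _ two_ne_zero
      exact (mul_eq_zero.mp h1).resolve_right hpow
    exact (mem_support_iff.mp hm₀) h2
  · intro m hm hne
    obtain ⟨j, hj⟩ := Finsupp.ne_iff.mp hne
    have hm1 : m j ≤ 1 := hml m hm j
    have hm2 : m₀ j ≤ 1 := hml m₀ hm₀ j
    have hej : m j + m₀ j = 1 := by omega
    rw [sum_sgn_prod_zero (fun i => m i + m₀ i) j hej, mul_zero]
  · intro hmem
    exact absurd hm₀ hmem

lemma parPoly_ml (b : R) : ∀ m ∈ (parPoly b).support, ∀ i, m i ≤ 1 := by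
  intro m hm i
  obtain ⟨m', _, hmem⟩ := Finset.mem_biUnion.mp (MvPolynomial.support_sum hm)
  rw [support_monomial] at hmem
  split_ifs at hmem
  · exact absurd hmem (Finset.notMem_empty m)
  · rw [Finset.mem_singleton] at hmem
    subst hmem
    rw [par, Finsupp.mapRange_apply]
    have := Nat.mod_lt (m' i) (show 0 < 2 by norm_num)
    omega

lemma grid_vanish_mem (b : R)
    (hz : ∀ ε : Fin d → ℝ, (∀ i, ε i = -1 ∨ ε i = 1) → eval ε b = 0) :
    b ∈ I2 d := by
  have h1 : parPoly b = 0 :=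
    multilinear_zero _ (parPoly_ml b)
      (fun s => by rw [eval_parPoly b (sgn s) (sgn_grid s)]; exact hz _ (sgn_grid s))
  have h2 := sub_parPoly_mem b
  rwa [h1, sub_zero] at h2

lemma I2_le_J : I2 d ≤ J d := by
  rw [I2, Ideal.span_le]
  rintro _ ⟨k, rfl⟩
  exact Xsq_sub_one_mem k

lemma eval_one_qpoly (Θ : Matrix (Fin d) (Fin d) ℤ) :
    eval (fun _ => (1:ℝ)) (qpoly Θ) = 1 := by
  rw [qpoly, map_prod]
  refine Finset.prod_eq_one fun c _ => ?_
  rw [_root_.map_mul, eval_C, _root_.map_add, _root_.map_one, map_prod]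
  norm_num

end StmtAux

/-- Theorem A (algebraic form): if `a` satisfies the zero condition of order one, i.e.
`a(1,…,1) = 2^d` and `a(ε) = 0` for all `ε ∈ Z' = {−1,1}^d \ {(1,…,1)}`, then
`a = Σ_Θ c_Θ · 2^d · q_Θ` with `Σ_Θ c_Θ(1,…,1) = 1`, the (finite) index set consisting of
all `d×d` integer matrices `Θ` whose columns are 0-1 vectors with exactly one or two ones
and with `det Θ = ±1`. -/
theorem stmt_8 (d : ℕ) (hd : 1 ≤ d) (a : MvPolynomial (Fin d) ℝ)
    (h1 : eval (fun _ => (1 : ℝ)) a = 2 ^ d)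
    (h0 : ∀ ε : Fin d → ℝ, (∀ i, ε i = -1 ∨ ε i = 1) → ε ≠ (fun _ => 1) →
      eval ε a = 0) :
    ∃ (S : Finset (Matrix (Fin d) (Fin d) ℤ))
      (c : Matrix (Fin d) (Fin d) ℤ → MvPolynomial (Fin d) ℝ),
      (∀ Θ, Θ ∈ S ↔
        ((∀ i j, Θ i j = 0 ∨ Θ i j = 1) ∧
         (∀ j, (∑ i, Θ i j) = 1 ∨ (∑ i, Θ i j) = 2) ∧
         (Θ.det = 1 ∨ Θ.det = -1))) ∧
      a = ∑ Θ ∈ S, c Θ * (2 : MvPolynomial (Fin d) ℝ) ^ d * qpoly Θ ∧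
      (∑ Θ ∈ S, eval (fun _ => (1 : ℝ)) (c Θ)) = 1 := by
  classical
  open StmtAux in
  -- the index set
  set S : Finset (Matrix (Fin d) (Fin d) ℤ) :=
    (Finset.univ.image
      (fun f : Fin d → Fin d → Fin 2 => Matrix.of fun i j => ((f i j : ℕ) : ℤ))).filter
      StmtAux.P with hSdef
  have hSmem : ∀ Θ, Θ ∈ S ↔ StmtAux.P Θ := by
    intro Θ
    constructor
    · exact fun h => (Finset.mem_filter.mp h).2
    · intro h
      refine Finset.mem_filter.mpr ⟨?_, h⟩
      refine Finset.mem_image.mpr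
        ⟨fun i j => if Θ i j = 1 then 1 else 0, Finset.mem_univ _, ?_⟩
      ext i j
      simp only [Matrix.of_apply]
      rcases h.1 i j with h0' | h1'
      · simp [h0']
      · simp [h1']
  -- base matrix
  set Θ₀ : Matrix (Fin d) (Fin d) ℤ := StmtAux.genMat (fun x => x) ∅ with hΘ₀
  have hP0 : StmtAux.P Θ₀ :=
    StmtAux.P_genMat _ _ (by simp) Fin.val Fin.val_injective (by simp)
  have hg0 : StmtAux.g Θ₀ = ∏ c : Fin d, (1 + (X c : MvPolynomial (Fin d) ℝ)) := by
    rw [hΘ₀, StmtAux.g_genMat _ _ (by simp)]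
    simp
  -- the remainder b
  set b : MvPolynomial (Fin d) ℝ := a - StmtAux.g Θ₀ with hb
  have hbgrid : ∀ ε : Fin d → ℝ, (∀ i, ε i = -1 ∨ ε i = 1) → eval ε b = 0 := by
    intro ε hε
    have hevg : eval ε (StmtAux.g Θ₀) = ∏ c : Fin d, (1 + ε c) := by
      rw [hg0, map_prod]
      exact Finset.prod_congr rfl fun c _ => by rw [_root_.map_add, _root_.map_one, eval_X]
    by_cases hone : ε = fun _ => 1
    · subst hone
      rw [hb, _root_.map_sub, h1, hevg]
      norm_num
    · obtain ⟨i0, hi0⟩ : ∃ i, ε i = -1 := by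
        by_contra hno
        push_neg at hno
        apply hone
        funext i
        rcases hε i with h | h
        · exact absurd h (hno i)
        · exact h
      rw [hb, _root_.map_sub, h0 ε hε hone, hevg]
      rw [Finset.prod_eq_zero (Finset.mem_univ i0) (by rw [hi0]; norm_num)]
      simp
  have hbJ : b ∈ StmtAux.J d := StmtAux.I2_le_J (StmtAux.grid_vanish_mem b hbgrid)
  -- move to a finset span
  have hset : (StmtAux.g '' (setOf StmtAux.P) : Set (MvPolynomial (Fin d) ℝ))
      = ↑(S.image StmtAux.g) := by
    rw [Finset.coe_image]
    congr 1
    ext Θ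
    simp [hSmem]
    exact Iff.rfl
  rw [StmtAux.J, hset] at hbJ
  obtain ⟨φ, -, hφ⟩ := Submodule.mem_span_finset.mp hbJ
  set n : MvPolynomial (Fin d) ℝ → ℕ :=
    fun p => (S.filter (fun Θ' => StmtAux.g Θ' = p)).card with hn
  set c' : Matrix (Fin d) (Fin d) ℤ → MvPolynomial (Fin d) ℝ :=
    fun Θ => C ((n (StmtAux.g Θ) : ℝ))⁻¹ * φ (StmtAux.g Θ) with hc'
  have hsum : ∑ Θ ∈ S, c' Θ * StmtAux.g Θ = b := by
    have hcomp := Finset.sum_comp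
      (fun p => C ((n p : ℝ))⁻¹ * φ p * p) StmtAux.g (s := S)
    calc ∑ Θ ∈ S, c' Θ * StmtAux.g Θ
        = ∑ Θ ∈ S, (fun p => C ((n p : ℝ))⁻¹ * φ p * p) (StmtAux.g Θ) := rfl
      _ = ∑ p ∈ S.image StmtAux.g, (n p) • (C ((n p : ℝ))⁻¹ * φ p * p) := hcomp
      _ = ∑ p ∈ S.image StmtAux.g, φ p • p := by
          refine Finset.sum_congr rfl fun p hp => ?_
          obtain ⟨Θ, hΘS, rfl⟩ := Finset.mem_image.mp hp
          have hmemf : Θ ∈ S.filter (fun Θ' => StmtAux.g Θ' = StmtAux.g Θ) :=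
            Finset.mem_filter.mpr ⟨hΘS, rfl⟩
          have hpos : 0 < n (StmtAux.g Θ) := Finset.card_pos.mpr ⟨Θ, hmemf⟩
          have hnz : ((n (StmtAux.g Θ) : ℝ)) ≠ 0 := by exact_mod_cast hpos.ne'
          rw [nsmul_eq_mul, smul_eq_mul]
          have hcast : ((n (StmtAux.g Θ) : ℕ) : MvPolynomial (Fin d) ℝ)
              = C ((n (StmtAux.g Θ) : ℝ)) := (map_natCast C _).symm
          rw [hcast, ← mul_assoc, ← mul_assoc, ← C_mul, mul_inv_cancel₀ hnz, C_1, one_mul]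
      _ = b := hφ
  -- the final coefficients
  set c : Matrix (Fin d) (Fin d) ℤ → MvPolynomial (Fin d) ℝ :=
    fun Θ => (if Θ = Θ₀ then 1 else 0) + c' Θ with hc
  have heq : a = ∑ Θ ∈ S, c Θ * (2 : MvPolynomial (Fin d) ℝ) ^ d * qpoly Θ := by
    have hΘ₀S : Θ₀ ∈ S := (hSmem Θ₀).mpr hP0
    have hexp : ∑ Θ ∈ S, c Θ * (2 : MvPolynomial (Fin d) ℝ) ^ d * qpoly Θ
        = (∑ Θ ∈ S, (if Θ = Θ₀ then StmtAux.g Θ else 0))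
          + ∑ Θ ∈ S, c' Θ * StmtAux.g Θ := by
      rw [← Finset.sum_add_distrib]
      refine Finset.sum_congr rfl fun Θ _ => ?_
      simp only [hc]
      by_cases hh : Θ = Θ₀
      · rw [if_pos hh, if_pos hh, StmtAux.g]; ring
      · rw [if_neg hh, if_neg hh, StmtAux.g]; ring
    rw [hexp, Finset.sum_ite_eq' S Θ₀ StmtAux.g, if_pos hΘ₀S, hsum, hb]
    ring
  refine ⟨S, c, hSmem, heq, ?_⟩
  -- the sum of evaluations at (1,…,1)
  have hev := congrArg (eval (fun _ => (1:ℝ))) heq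
  rw [h1, map_sum] at hev
  have h2 : ∀ Θ ∈ S, eval (fun _ => (1:ℝ)) (c Θ * (2 : MvPolynomial (Fin d) ℝ) ^ d * qpoly Θ)
      = eval (fun _ => (1:ℝ)) (c Θ) * 2 ^ d := by
    intro Θ _
    rw [_root_.map_mul, _root_.map_mul, map_pow, StmtAux.eval_one_qpoly, mul_one]
    norm_num
  rw [Finset.sum_congr rfl h2, ← Finset.sum_mul] at hev
  have hne : (2:ℝ)^d ≠ 0 := pow_ne_zero _ two_ne_zero
  apply mul_right_cancel₀ hne
  rw [one_mul, ← hev]
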